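/- (Non-expansion after reaching statistical accuracy.) In the one-step sample setting, write ε_stat = κ·√(d log d / n)·σ. If D ≤ 50 ε_stat and ‖Δ‖ ≤ D + ε_stat, then D⁺ ≤ 100 ε_stat. -/

import Mathlib

open Matrix
open scoped Matrix.Norms.L2Operator

lemma aux_norm_transpose {m n : ℕ} (A : Matrix (Fin m) (Fin n) ℝ) : ‖Aᵀ‖ = ‖A‖ := by
  rw [← Matrix.conjTranspose_eq_transpose_of_trivial]
  exact Matrix.l2_opNorm_conjTranspose A

lemma aux_norm_mul_self {m n : ℕ} (A : Matrix (Fin m) (Fin n) ℝ) : ‖A * Aᵀ‖ = ‖A‖ * ‖A‖ := by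
  rw [show A * Aᵀ = (Aᵀ)ᴴ * (Aᵀ) by
    rw [Matrix.conjTranspose_eq_transpose_of_trivial, Matrix.transpose_transpose],
    Matrix.l2_opNorm_conjTranspose_mul_self, aux_norm_transpose]

lemma aux_norm_one {m : ℕ} : ‖(1 : Matrix (Fin m) (Fin m) ℝ)‖ ≤ 1 := by
  rw [Matrix.cstar_norm_def, _root_.map_one, ContinuousLinearMap.one_def]
  exact ContinuousLinearMap.norm_id_le

lemma aux_norm_diag {m : ℕ} (A : Matrix (Fin m) (Fin m) ℝ) (hA : A.IsDiag) (c : ℝ)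
    (hc : 0 ≤ c) (h : ∀ i, |A i i| ≤ c) : ‖A‖ ≤ c := by
  rw [Matrix.l2_opNorm_def]
  refine ContinuousLinearMap.opNorm_le_bound _ hc (fun x => ?_)
  have hy : ∀ i, (Matrix.toEuclideanLin A x) i = A i i * x i := by
    intro i
    have : (Matrix.toEuclideanLin A x) i = (A *ᵥ ((WithLp.equiv 2 (Fin m → ℝ)) x)) i := rfl
    rw [this, Matrix.mulVec, dotProduct]
    rw [Finset.sum_eq_single i]
    · rfl
    · intro j _ hj; rw [hA (Ne.symm hj), zero_mul]
    · intro hi; exact absurd (Finset.mem_univ i) hi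
  have h1 : ‖(Matrix.toEuclideanLin (𝕜 := ℝ) (m := Fin m) (n := Fin m)).trans
      LinearMap.toContinuousLinearMap A x‖ = ‖Matrix.toEuclideanLin A x‖ := rfl
  rw [h1, EuclideanSpace.norm_eq, EuclideanSpace.norm_eq]
  calc Real.sqrt (∑ i, ‖(Matrix.toEuclideanLin A x) i‖ ^ 2)
      ≤ Real.sqrt (∑ i, c ^ 2 * ‖x i‖ ^ 2) := by
        apply Real.sqrt_le_sqrt
        apply Finset.sum_le_sum
        intro i _
        rw [hy i]
        have : ‖A i i * x i‖ ≤ c * ‖x i‖ := by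
          rw [norm_mul]
          exact mul_le_mul_of_nonneg_right ((Real.norm_eq_abs _) ▸ h i) (norm_nonneg _)
        calc ‖A i i * x i‖ ^ 2 ≤ (c * ‖x i‖) ^ 2 := by
              apply pow_le_pow_left₀ (norm_nonneg _) this
          _ = c ^ 2 * ‖x i‖ ^ 2 := by ring
    _ = c * Real.sqrt (∑ i, ‖x i‖ ^ 2) := by
        rw [← Finset.mul_sum, Real.sqrt_mul (sq_nonneg c), Real.sqrt_sq hc]

lemma aux_expand {p q l : ℕ} (η : ℝ) (A E : Matrix (Fin p) (Fin l) ℝ)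
    (B G : Matrix (Fin q) (Fin l) ℝ) :
    (A - η • E) * (B - η • G)ᵀ
      = A * Bᵀ - η • (E * Bᵀ + A * Gᵀ) + (η * η) • (E * Gᵀ) := by
  simp only [Matrix.transpose_sub, Matrix.transpose_smul, Matrix.sub_mul, Matrix.mul_sub,
    Matrix.smul_mul, Matrix.mul_smul, smul_smul, smul_add, smul_sub]
  abel

lemma aux_numeric (σ1 e s t P Q : ℝ) (hσ1 : 0 < σ1) (he : 0 ≤ e) (heσ : 500 * e ≤ σ1)
    (hs0 : 0 ≤ s) (ht0 : 0 ≤ t) (hP0 : 0 ≤ P) (hQ0 : 0 ≤ Q)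
    (hs2 : s * s ≤ σ1 + 50 * e) (ht2 : t * t ≤ 50 * e)
    (hPu : P ≤ 102 * e * (s + t)) (hQu : Q ≤ 102 * e * (s + t)) :
    (200 * (P * s) * σ1 + P * P ≤ 500000 * e * σ1 ^ 2) ∧
    (200 * (Q * t) * σ1 + Q * Q ≤ 500000 * e * σ1 ^ 2) ∧
    (100 * (P * t + Q * s) * σ1 + P * Q ≤ 500000 * e * σ1 ^ 2) := by
  set u := s + t with hu_def
  have hu0 : 0 ≤ u := by positivity
  have hu2 : u * u ≤ 12 / 5 * σ1 := by nlinarith [sq_nonneg (s - t)]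
  have hW0 : 0 ≤ 102 * e * u := by positivity
  have hprod : ∀ a b : ℝ, 0 ≤ a → a ≤ 102 * e * u → 0 ≤ b → b ≤ u →
      a * b ≤ 102 * e * (12 / 5 * σ1) := by
    intro a b ha0 ha hb0 hb
    calc a * b ≤ (102 * e * u) * u := by
          apply mul_le_mul ha hb hb0 hW0
      _ = 102 * e * (u * u) := by ring
      _ ≤ 102 * e * (12 / 5 * σ1) := by
          apply mul_le_mul_of_nonneg_left hu2 (by positivity)
  have hee : e * e ≤ e * (σ1 / 500) := by nlinarith
  have hsq : ∀ a b : ℝ, 0 ≤ a → a ≤ 102 * e * u → 0 ≤ b → b ≤ 102 * e * u →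
      a * b ≤ 51 * e * σ1 ^ 2 := by
    intro a b ha0 ha hb0 hb
    calc a * b ≤ (102 * e * u) * (102 * e * u) := mul_le_mul ha hb hb0 hW0
      _ = 10404 * (e * e) * (u * u) := by ring
      _ ≤ 10404 * (e * (σ1 / 500)) * (12 / 5 * σ1) := by
          apply mul_le_mul (mul_le_mul_of_nonneg_left hee (by norm_num)) hu2
            (by positivity) (by positivity)
      _ ≤ 51 * e * σ1 ^ 2 := by nlinarith
  have hsu : s ≤ u := by simp [hu_def]; linarith
  have htu : t ≤ u := by simp [hu_def]; linarith
  have hPs := hprod P s hP0 hPu hs0 hsu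
  have hQt := hprod Q t hQ0 hQu ht0 htu
  have hPt := hprod P t hP0 hPu ht0 htu
  have hQs := hprod Q s hQ0 hQu hs0 hsu
  have hPP := hsq P P hP0 hPu hP0 hPu
  have hQQ := hsq Q Q hQ0 hQu hQ0 hQu
  have hPQ := hsq P Q hP0 hPu hQ0 hQu
  refine ⟨?_, ?_, ?_⟩ <;> nlinarith [sq_nonneg σ1, mul_pos hσ1 hσ1]

lemma aux_root (a b : ℝ) (ha : 0 ≤ a) (hb : 0 ≤ b) (h : a ^ 2 ≤ b ^ 2) : a ≤ b := by
  nlinarith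

lemma aux_eps (σr κ σ kR dR L nR : ℝ) (hσr : 0 < σr) (hκ1 : 1 ≤ κ) (hσ : 0 ≤ σ)
    (hk1 : 1 ≤ kR) (hd0 : 0 < dR) (hn0 : 0 < nR) (hL : 0.69 ≤ L)
    (hnbig : 10 ^ 6 * kR * κ ^ 2 * dR * L ^ 3 * max 1 (σ ^ 2 / σr ^ 2) ≤ nR) :
    (κ * Real.sqrt (dR * L / nR) * σ) ^ 2 ≤ (σr / 500) ^ 2 := by
  have hL0 : 0 < L := by linarith
  have hq0 : 0 ≤ dR * L / nR := by positivity
  set M := max 1 (σ ^ 2 / σr ^ 2) with hM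
  have hM1 : (1:ℝ) ≤ M := le_max_left _ _
  have hM0 : 0 < M := lt_of_lt_of_le one_pos hM1
  have hMσ : σ ^ 2 ≤ M * σr ^ 2 := by
    have h1 : σ ^ 2 / σr ^ 2 ≤ M := le_max_right _ _
    have h2 : σ ^ 2 / σr ^ 2 * σr ^ 2 = σ ^ 2 := div_mul_cancel₀ _ (by positivity)
    have h3 := mul_le_mul_of_nonneg_right h1 (sq_nonneg σr)
    linarith
  rw [mul_pow, mul_pow, Real.sq_sqrt hq0]
  have key : κ ^ 2 * (dR * L) * σ ^ 2 * 250000 ≤ σr ^ 2 * nR := by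
    have hL2 : (1:ℝ) ≤ 4 * kR * L ^ 2 := by nlinarith
    have h1 : 250000 * L ≤ 10 ^ 6 * kR * L ^ 3 := by nlinarith
    have hZ : 0 ≤ κ ^ 2 * dR * M * σr ^ 2 :=
      mul_nonneg (mul_nonneg (by positivity) hM0.le) (sq_nonneg σr)
    have step1 : κ ^ 2 * (dR * L) * σ ^ 2 * 250000
        ≤ κ ^ 2 * (dR * L) * (M * σr ^ 2) * 250000 := by
      apply mul_le_mul_of_nonneg_right _ (by norm_num)
      apply mul_le_mul_of_nonneg_left hMσ (by positivity)
    have step2 : κ ^ 2 * (dR * L) * (M * σr ^ 2) * 250000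
        ≤ σr ^ 2 * (10 ^ 6 * kR * κ ^ 2 * dR * L ^ 3 * M) := by
      calc κ ^ 2 * (dR * L) * (M * σr ^ 2) * 250000
          = (κ ^ 2 * dR * M * σr ^ 2) * (250000 * L) := by ring
        _ ≤ (κ ^ 2 * dR * M * σr ^ 2) * (10 ^ 6 * kR * L ^ 3) :=
            mul_le_mul_of_nonneg_left h1 hZ
        _ = σr ^ 2 * (10 ^ 6 * kR * κ ^ 2 * dR * L ^ 3 * M) := by ring
    have step3 : σr ^ 2 * (10 ^ 6 * kR * κ ^ 2 * dR * L ^ 3 * M) ≤ σr ^ 2 * nR :=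
      mul_le_mul_of_nonneg_left hnbig (sq_nonneg σr)
    linarith
  rw [div_pow, show ((500:ℝ)) ^ 2 = 250000 by norm_num,
    le_div_iff₀ (by norm_num : (0:ℝ) < 250000)]
  calc κ ^ 2 * (dR * L / nR) * σ ^ 2 * 250000
      = κ ^ 2 * (dR * L) * σ ^ 2 * 250000 / nR := by ring
    _ ≤ σr ^ 2 := by rw [div_le_iff₀ hn0]; linarith


set_option maxHeartbeats 4000000 in
theorem stmt_17
    (d k r : ℕ) (hd : 2 ≤ d) (hr : 0 < r) (hrk : r ≤ k) (hkd : k ≤ d)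
    (U : Matrix (Fin d) (Fin r) ℝ) (V : Matrix (Fin d) (Fin (d - r)) ℝ)
    (hU : Uᵀ * U = 1) (hV : Vᵀ * V = 1) (hUV : Uᵀ * V = 0)
    (hUVc : U * Uᵀ + V * Vᵀ = 1)
    (σr σ1 : ℝ) (hσr : 0 < σr)
    (DS : Matrix (Fin r) (Fin r) ℝ) (hDS : DS.IsDiag)
    (hDSlb : ∀ i, σr ≤ DS i i) (hDSub : ∀ i, DS i i ≤ σ1)
    (DT : Matrix (Fin (d - r)) (Fin (d - r)) ℝ) (hDT : DT.IsDiag)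
    (hDTnn : ∀ i, 0 ≤ DT i i)
    (κ : ℝ) (hκ : κ = σ1 / σr)
    (η : ℝ) (hη : η = 1 / (100 * σ1))
    (X : Matrix (Fin d) (Fin d) ℝ) (hX : X = U * DS * Uᵀ + V * DT * Vᵀ)
    (F : Matrix (Fin d) (Fin k) ℝ)
    (S : Matrix (Fin r) (Fin k) ℝ) (hS : S = Uᵀ * F)
    (T : Matrix (Fin (d - r)) (Fin k) ℝ) (hT : T = Vᵀ * F)
    (G : Matrix (Fin d) (Fin k) ℝ) (hG : G = (F * Fᵀ - X) * F)
    (σ : ℝ) (hσ : 0 ≤ σ)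
    (n : ℕ) (hn : 0 < n)
    (hnbig : (10 : ℝ) ^ 6 * k * κ ^ 2 * d * (Real.log d) ^ 3 * max 1 (σ ^ 2 / σr ^ 2) ≤ n)
    (Δ : Matrix (Fin d) (Fin d) ℝ) (hΔsymm : Δ.IsSymm)
    (Fp : Matrix (Fin d) (Fin k) ℝ) (hFp : Fp = F - η • (G + Δ * F))
    (Sp : Matrix (Fin r) (Fin k) ℝ) (hSp : Sp = Uᵀ * Fp)
    (Tp : Matrix (Fin (d - r)) (Fin k) ℝ) (hTp : Tp = Vᵀ * Fp)
    (D : ℝ) (hD : D = max (max ‖S * Sᵀ - DS‖ ‖T * Tᵀ‖) ‖S * Tᵀ‖)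
    (hDTsmall : ‖DT‖ ≤ Real.sqrt (d * Real.log d / n) * σ)
    (Dp : ℝ) (hDp : Dp = max (max ‖Sp * Spᵀ - DS‖ ‖Tp * Tpᵀ‖) ‖Sp * Tpᵀ‖)
    (εstat : ℝ) (hεstat : εstat = κ * Real.sqrt (d * Real.log d / n) * σ)
    (hDsmall : D ≤ 50 * εstat)
    (hΔ : ‖Δ‖ ≤ D + εstat) :
    Dp ≤ 100 * εstat := by
  -- basic scalar facts
  have hσ1 : σr ≤ σ1 := le_trans (hDSlb ⟨0, hr⟩) (hDSub ⟨0, hr⟩)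
  have hσ1pos : 0 < σ1 := lt_of_lt_of_le hσr hσ1
  have hκ1 : 1 ≤ κ := by rw [hκ, le_div_iff₀ hσr]; linarith
  have hκpos : 0 < κ := lt_of_lt_of_le one_pos hκ1
  have hd0 : (0:ℝ) < d := by positivity
  have hn0 : (0:ℝ) < n := by exact_mod_cast hn
  have hlogd : Real.log 2 ≤ Real.log d := by
    apply Real.log_le_log (by norm_num)
    exact_mod_cast hd
  have hlog2 : (0.6931471803 : ℝ) < Real.log 2 := Real.log_two_gt_d9
  have hlogdpos : 0 < Real.log d := by linarith
  have hq0 : 0 ≤ (d * Real.log d / n : ℝ) := by positivity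
  have hεnn : 0 ≤ εstat := by rw [hεstat]; positivity
  -- εstat ≤ σr / 500
  have hk1 : (1:ℝ) ≤ k := by
    have : 1 ≤ k := le_trans hr hrk
    exact_mod_cast this
  have hεσr : 500 * εstat ≤ σr := by
    have h2 : εstat ^ 2 ≤ (σr / 500) ^ 2 := by
      rw [hεstat]
      exact aux_eps σr κ σ k d (Real.log d) n hσr hκ1 hσ hk1 hd0 hn0 (by linarith) hnbig
    have h3 : εstat ≤ σr / 500 := aux_root _ _ hεnn (by positivity) h2
    linarith
  -- norms of U, V, DS, DT
  have hnU : ‖U‖ ≤ 1 := by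
    have h2 : ‖Uᴴ * U‖ = ‖U‖ * ‖U‖ := Matrix.l2_opNorm_conjTranspose_mul_self U
    rw [Matrix.conjTranspose_eq_transpose_of_trivial, hU] at h2
    refine aux_root _ _ (norm_nonneg U) one_pos.le ?_
    rw [sq, ← h2, one_pow]
    exact aux_norm_one
  have hnV : ‖V‖ ≤ 1 := by
    have h2 : ‖Vᴴ * V‖ = ‖V‖ * ‖V‖ := Matrix.l2_opNorm_conjTranspose_mul_self V
    rw [Matrix.conjTranspose_eq_transpose_of_trivial, hV] at h2
    refine aux_root _ _ (norm_nonneg V) one_pos.le ?_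
    rw [sq, ← h2, one_pow]
    exact aux_norm_one
  have hnUt : ‖Uᵀ‖ ≤ 1 := by rw [aux_norm_transpose]; exact hnU
  have hnVt : ‖Vᵀ‖ ≤ 1 := by rw [aux_norm_transpose]; exact hnV
  have hnDS : ‖DS‖ ≤ σ1 := by
    apply aux_norm_diag DS hDS σ1 (le_of_lt hσ1pos)
    intro i
    rw [abs_le]
    constructor
    · linarith [hDSlb i]
    · exact hDSub i
  have hnDT : ‖DT‖ ≤ εstat := by
    refine hDTsmall.trans ?_
    rw [hεstat]
    nlinarith [Real.sqrt_nonneg (d * Real.log d / n), hσ, hκ1,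
      mul_nonneg (Real.sqrt_nonneg (d * Real.log d / n)) hσ]
  -- matrix identities
  have hVU : Vᵀ * U = 0 := by
    have h := congrArg Matrix.transpose hUV
    simpa [Matrix.transpose_mul] using h
  have hUUM : ∀ {p : ℕ} (M : Matrix (Fin r) (Fin p) ℝ), Uᵀ * (U * M) = M := by
    intro p M; rw [← Matrix.mul_assoc, hU, Matrix.one_mul]
  have hVVM : ∀ {p : ℕ} (M : Matrix (Fin (d - r)) (Fin p) ℝ), Vᵀ * (V * M) = M := by
    intro p M; rw [← Matrix.mul_assoc, hV, Matrix.one_mul]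
  have hUVM : ∀ {p : ℕ} (M : Matrix (Fin (d - r)) (Fin p) ℝ), Uᵀ * (V * M) = 0 := by
    intro p M; rw [← Matrix.mul_assoc, hUV, Matrix.zero_mul]
  have hVUM : ∀ {p : ℕ} (M : Matrix (Fin r) (Fin p) ℝ), Vᵀ * (U * M) = 0 := by
    intro p M; rw [← Matrix.mul_assoc, hVU, Matrix.zero_mul]
  have hF : F = U * S + V * T := by
    rw [hS, hT, ← Matrix.mul_assoc, ← Matrix.mul_assoc, ← Matrix.add_mul, hUVc, Matrix.one_mul]
  have hUX : Uᵀ * X = DS * Uᵀ := by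
    rw [hX, Matrix.mul_add, Matrix.mul_assoc U DS, hUUM, Matrix.mul_assoc V DT, hUVM, add_zero]
  have hVX : Vᵀ * X = DT * Vᵀ := by
    rw [hX, Matrix.mul_add, Matrix.mul_assoc U DS, hVUM, Matrix.mul_assoc V DT, hVVM, zero_add]
  have hFtF : Fᵀ * F = Sᵀ * S + Tᵀ * T := by
    rw [hF]
    simp only [Matrix.transpose_add, Matrix.transpose_mul, Matrix.add_mul, Matrix.mul_add,
      Matrix.mul_assoc, hUUM, hVVM, hUVM, hVUM, Matrix.mul_zero, add_zero, zero_add]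
  have hUG : Uᵀ * G = (S * Sᵀ - DS) * S + (S * Tᵀ) * T := by
    calc Uᵀ * G = Uᵀ * (F * (Fᵀ * F)) - Uᵀ * (X * F) := by
          rw [hG, Matrix.sub_mul, Matrix.mul_sub, Matrix.mul_assoc]
      _ = S * (Sᵀ * S + Tᵀ * T) - DS * S := by
          rw [← Matrix.mul_assoc Uᵀ F, ← hS, hFtF, ← Matrix.mul_assoc Uᵀ X, hUX,
            Matrix.mul_assoc, ← hS]
      _ = (S * Sᵀ - DS) * S + (S * Tᵀ) * T := by
          simp only [Matrix.mul_add, Matrix.sub_mul, Matrix.mul_assoc]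
          abel
  have hVG : Vᵀ * G = (T * Sᵀ) * S + ((T * Tᵀ) * T - DT * T) := by
    calc Vᵀ * G = Vᵀ * (F * (Fᵀ * F)) - Vᵀ * (X * F) := by
          rw [hG, Matrix.sub_mul, Matrix.mul_sub, Matrix.mul_assoc]
      _ = T * (Sᵀ * S + Tᵀ * T) - DT * T := by
          rw [← Matrix.mul_assoc Vᵀ F, ← hT, hFtF, ← Matrix.mul_assoc Vᵀ X, hVX,
            Matrix.mul_assoc, ← hT]
      _ = (T * Sᵀ) * S + ((T * Tᵀ) * T - DT * T) := by
          simp only [Matrix.mul_add, Matrix.mul_assoc]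
          abel
  have hSp' : Sp = S - η • ((S * Sᵀ - DS) * S + (S * Tᵀ) * T + Uᵀ * (Δ * F)) := by
    rw [hSp, hFp, Matrix.mul_sub, Matrix.mul_smul, Matrix.mul_add, hUG, ← hS]
  have hTp' : Tp = T - η • ((T * Sᵀ) * S + ((T * Tᵀ) * T - DT * T) + Vᵀ * (Δ * F)) := by
    rw [hTp, hFp, Matrix.mul_sub, Matrix.mul_smul, Matrix.mul_add, hVG, ← hT]
  set ES : Matrix (Fin r) (Fin k) ℝ :=
    (S * Sᵀ - DS) * S + (S * Tᵀ) * T + Uᵀ * (Δ * F) with hES_def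
  set ET : Matrix (Fin (d - r)) (Fin k) ℝ :=
    (T * Sᵀ) * S + ((T * Tᵀ) * T - DT * T) + Vᵀ * (Δ * F) with hET_def
  -- norm bounds
  have hAn : ‖S * Sᵀ - DS‖ ≤ 50 * εstat := by
    refine le_trans ?_ hDsmall
    rw [hD]
    exact le_trans (le_max_left _ _) (le_max_left _ _)
  have hBn : ‖T * Tᵀ‖ ≤ 50 * εstat := by
    refine le_trans ?_ hDsmall
    rw [hD]
    exact le_trans (le_max_right _ _) (le_max_left _ _)
  have hCn : ‖S * Tᵀ‖ ≤ 50 * εstat := by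
    refine le_trans ?_ hDsmall
    rw [hD]
    exact le_max_right _ _
  have hTSn : ‖T * Sᵀ‖ ≤ 50 * εstat := by
    have h1 : T * Sᵀ = (S * Tᵀ)ᵀ := by rw [Matrix.transpose_mul, Matrix.transpose_transpose]
    rw [h1, aux_norm_transpose]
    exact hCn
  have hDnn : 0 ≤ D := by
    rw [hD]
    exact le_trans (norm_nonneg _) (le_max_right _ _)
  have hδn : ‖Δ‖ ≤ 51 * εstat := by linarith
  have hs2 : ‖S‖ * ‖S‖ ≤ σ1 + 50 * εstat := by
    have h1 := aux_norm_mul_self S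
    have h2 : ‖S * Sᵀ‖ ≤ ‖DS‖ + ‖S * Sᵀ - DS‖ := by
      calc ‖S * Sᵀ‖ = ‖DS + (S * Sᵀ - DS)‖ := by rw [add_sub_cancel]
        _ ≤ ‖DS‖ + ‖S * Sᵀ - DS‖ := norm_add_le _ _
    linarith
  have ht2 : ‖T‖ * ‖T‖ ≤ 50 * εstat := by
    have h1 := aux_norm_mul_self T
    linarith
  have hFn : ‖F‖ ≤ ‖S‖ + ‖T‖ := by
    rw [hF]
    have h1 : ‖U * S‖ ≤ ‖U‖ * ‖S‖ := Matrix.l2_opNorm_mul _ _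
    have h2 : ‖V * T‖ ≤ ‖V‖ * ‖T‖ := Matrix.l2_opNorm_mul _ _
    have h3 := mul_le_mul_of_nonneg_right hnU (norm_nonneg S)
    have h4 := mul_le_mul_of_nonneg_right hnV (norm_nonneg T)
    have h5 := norm_add_le (U * S) (V * T)
    simp only [one_mul] at h3 h4
    linarith
  have hDF : ‖Δ * F‖ ≤ 51 * εstat * (‖S‖ + ‖T‖) := by
    have h1 : ‖Δ * F‖ ≤ ‖Δ‖ * ‖F‖ := Matrix.l2_opNorm_mul _ _
    have h2 : ‖Δ‖ * ‖F‖ ≤ (51 * εstat) * (‖S‖ + ‖T‖) :=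
      mul_le_mul hδn hFn (norm_nonneg F) (by linarith)
    linarith
  have hNS : ‖Uᵀ * (Δ * F)‖ ≤ 51 * εstat * (‖S‖ + ‖T‖) := by
    have h1 : ‖Uᵀ * (Δ * F)‖ ≤ ‖Uᵀ‖ * ‖Δ * F‖ := Matrix.l2_opNorm_mul _ _
    have h2 : ‖Uᵀ‖ * ‖Δ * F‖ ≤ 1 * (51 * εstat * (‖S‖ + ‖T‖)) :=
      mul_le_mul hnUt hDF (norm_nonneg _) one_pos.le
    rw [one_mul] at h2
    linarith
  have hNT : ‖Vᵀ * (Δ * F)‖ ≤ 51 * εstat * (‖S‖ + ‖T‖) := by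
    have h1 : ‖Vᵀ * (Δ * F)‖ ≤ ‖Vᵀ‖ * ‖Δ * F‖ := Matrix.l2_opNorm_mul _ _
    have h2 : ‖Vᵀ‖ * ‖Δ * F‖ ≤ 1 * (51 * εstat * (‖S‖ + ‖T‖)) :=
      mul_le_mul hnVt hDF (norm_nonneg _) one_pos.le
    rw [one_mul] at h2
    linarith
  have hmul_bound : ∀ {p q : ℕ} (M : Matrix (Fin p) (Fin q) ℝ) (N : Matrix (Fin q) (Fin k) ℝ)
      (c : ℝ), ‖M‖ ≤ c → ‖M * N‖ ≤ c * ‖N‖ := by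
    intro p q M N c hc
    calc ‖M * N‖ ≤ ‖M‖ * ‖N‖ := Matrix.l2_opNorm_mul _ _
      _ ≤ c * ‖N‖ := mul_le_mul_of_nonneg_right hc (norm_nonneg _)
  have hESn : ‖ES‖ ≤ 102 * εstat * (‖S‖ + ‖T‖) := by
    have h1 : ‖(S * Sᵀ - DS) * S‖ ≤ 50 * εstat * ‖S‖ := hmul_bound _ _ _ hAn
    have h2 : ‖(S * Tᵀ) * T‖ ≤ 50 * εstat * ‖T‖ := hmul_bound _ _ _ hCn
    have h4 := norm_add_le ((S * Sᵀ - DS) * S + (S * Tᵀ) * T) (Uᵀ * (Δ * F))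
    have h5 := norm_add_le ((S * Sᵀ - DS) * S) ((S * Tᵀ) * T)
    have h6 : 0 ≤ εstat * ‖S‖ := mul_nonneg hεnn (norm_nonneg _)
    have h7 : 0 ≤ εstat * ‖T‖ := mul_nonneg hεnn (norm_nonneg _)
    rw [← hES_def] at h4
    linarith only [h1, h2, h4, h5, h6, h7, hNS]
  have hETn : ‖ET‖ ≤ 102 * εstat * (‖S‖ + ‖T‖) := by
    have h1 : ‖(T * Sᵀ) * S‖ ≤ 50 * εstat * ‖S‖ := hmul_bound _ _ _ hTSn
    have h2 : ‖(T * Tᵀ) * T‖ ≤ 50 * εstat * ‖T‖ := hmul_bound _ _ _ hBn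
    have h3 : ‖DT * T‖ ≤ εstat * ‖T‖ := hmul_bound _ _ _ hnDT
    have h4 := norm_add_le ((T * Sᵀ) * S + ((T * Tᵀ) * T - DT * T)) (Vᵀ * (Δ * F))
    have h5 := norm_add_le ((T * Sᵀ) * S) ((T * Tᵀ) * T - DT * T)
    have h5' := norm_sub_le ((T * Tᵀ) * T) (DT * T)
    have h6 : 0 ≤ εstat * ‖S‖ := mul_nonneg hεnn (norm_nonneg _)
    have h7 : 0 ≤ εstat * ‖T‖ := mul_nonneg hεnn (norm_nonneg _)
    rw [← hET_def] at h4
    linarith only [h1, h2, h3, h4, h5, h5', h6, h7, hNT]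
  -- expansion identities
  have e1 : Sp * Spᵀ - DS
      = ((S * Sᵀ - DS) - η • (ES * Sᵀ + S * ESᵀ)) + (η * η) • (ES * ESᵀ) := by
    rw [hSp', aux_expand]
    abel
  have e2 : Tp * Tpᵀ = (T * Tᵀ - η • (ET * Tᵀ + T * ETᵀ)) + (η * η) • (ET * ETᵀ) := by
    rw [hTp', aux_expand]
  have e3 : Sp * Tpᵀ = (S * Tᵀ - η • (ES * Tᵀ + S * ETᵀ)) + (η * η) • (ES * ETᵀ) := by
    rw [hSp', hTp', aux_expand]
  have hη0 : 0 < η := by rw [hη]; positivity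
  have hsmul : ∀ {p q : ℕ} (c : ℝ) (M : Matrix (Fin p) (Fin q) ℝ), 0 ≤ c →
      ‖c • M‖ = c * ‖M‖ := by
    intro p q c M hc
    rw [norm_smul, Real.norm_eq_abs, abs_of_nonneg hc]
  -- three norm estimates
  have hn1 : ‖Sp * Spᵀ - DS‖
      ≤ 50 * εstat + η * (‖ES‖ * ‖S‖ + ‖S‖ * ‖ES‖) + η * η * (‖ES‖ * ‖ES‖) := by
    rw [e1]
    have t1 := norm_add_le ((S * Sᵀ - DS) - η • (ES * Sᵀ + S * ESᵀ)) ((η * η) • (ES * ESᵀ))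
    have t2 := norm_sub_le (S * Sᵀ - DS) (η • (ES * Sᵀ + S * ESᵀ))
    have t3 : ‖η • (ES * Sᵀ + S * ESᵀ)‖ = η * ‖ES * Sᵀ + S * ESᵀ‖ := hsmul _ _ hη0.le
    have t4 : ‖(η * η) • (ES * ESᵀ)‖ = η * η * ‖ES * ESᵀ‖ :=
      hsmul _ _ (mul_nonneg hη0.le hη0.le)
    have t5 := norm_add_le (ES * Sᵀ) (S * ESᵀ)
    have t6 : ‖ES * Sᵀ‖ ≤ ‖ES‖ * ‖S‖ := by
      have := Matrix.l2_opNorm_mul ES Sᵀ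
      rw [aux_norm_transpose] at this
      exact this
    have t7 : ‖S * ESᵀ‖ ≤ ‖S‖ * ‖ES‖ := by
      have := Matrix.l2_opNorm_mul S ESᵀ
      rw [aux_norm_transpose] at this
      exact this
    have t8 : ‖ES * ESᵀ‖ = ‖ES‖ * ‖ES‖ := aux_norm_mul_self ES
    have t9 : η * ‖ES * Sᵀ + S * ESᵀ‖ ≤ η * (‖ES‖ * ‖S‖ + ‖S‖ * ‖ES‖) :=
      mul_le_mul_of_nonneg_left (by linarith only [t5, t6, t7]) hη0.le
    have t8' : η * η * ‖ES * ESᵀ‖ = η * η * (‖ES‖ * ‖ES‖) := by rw [t8]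
    linarith only [t1, t2, t3, t4, t9, t8', hAn]
  have hn2 : ‖Tp * Tpᵀ‖
      ≤ 50 * εstat + η * (‖ET‖ * ‖T‖ + ‖T‖ * ‖ET‖) + η * η * (‖ET‖ * ‖ET‖) := by
    rw [e2]
    have t1 := norm_add_le (T * Tᵀ - η • (ET * Tᵀ + T * ETᵀ)) ((η * η) • (ET * ETᵀ))
    have t2 := norm_sub_le (T * Tᵀ) (η • (ET * Tᵀ + T * ETᵀ))
    have t3 : ‖η • (ET * Tᵀ + T * ETᵀ)‖ = η * ‖ET * Tᵀ + T * ETᵀ‖ := hsmul _ _ hη0.le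
    have t4 : ‖(η * η) • (ET * ETᵀ)‖ = η * η * ‖ET * ETᵀ‖ :=
      hsmul _ _ (mul_nonneg hη0.le hη0.le)
    have t5 := norm_add_le (ET * Tᵀ) (T * ETᵀ)
    have t6 : ‖ET * Tᵀ‖ ≤ ‖ET‖ * ‖T‖ := by
      have := Matrix.l2_opNorm_mul ET Tᵀ
      rw [aux_norm_transpose] at this
      exact this
    have t7 : ‖T * ETᵀ‖ ≤ ‖T‖ * ‖ET‖ := by
      have := Matrix.l2_opNorm_mul T ETᵀ
      rw [aux_norm_transpose] at this
      exact this
    have t8 : ‖ET * ETᵀ‖ = ‖ET‖ * ‖ET‖ := aux_norm_mul_self ET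
    have t9 : η * ‖ET * Tᵀ + T * ETᵀ‖ ≤ η * (‖ET‖ * ‖T‖ + ‖T‖ * ‖ET‖) :=
      mul_le_mul_of_nonneg_left (by linarith only [t5, t6, t7]) hη0.le
    have t8' : η * η * ‖ET * ETᵀ‖ = η * η * (‖ET‖ * ‖ET‖) := by rw [t8]
    linarith only [t1, t2, t3, t4, t9, t8', hBn]
  have hn3 : ‖Sp * Tpᵀ‖
      ≤ 50 * εstat + η * (‖ES‖ * ‖T‖ + ‖S‖ * ‖ET‖) + η * η * (‖ES‖ * ‖ET‖) := by
    rw [e3]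
    have t1 := norm_add_le (S * Tᵀ - η • (ES * Tᵀ + S * ETᵀ)) ((η * η) • (ES * ETᵀ))
    have t2 := norm_sub_le (S * Tᵀ) (η • (ES * Tᵀ + S * ETᵀ))
    have t3 : ‖η • (ES * Tᵀ + S * ETᵀ)‖ = η * ‖ES * Tᵀ + S * ETᵀ‖ := hsmul _ _ hη0.le
    have t4 : ‖(η * η) • (ES * ETᵀ)‖ = η * η * ‖ES * ETᵀ‖ :=
      hsmul _ _ (mul_nonneg hη0.le hη0.le)
    have t5 := norm_add_le (ES * Tᵀ) (S * ETᵀ)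
    have t6 : ‖ES * Tᵀ‖ ≤ ‖ES‖ * ‖T‖ := by
      have := Matrix.l2_opNorm_mul ES Tᵀ
      rw [aux_norm_transpose] at this
      exact this
    have t7 : ‖S * ETᵀ‖ ≤ ‖S‖ * ‖ET‖ := by
      have := Matrix.l2_opNorm_mul S ETᵀ
      rw [aux_norm_transpose] at this
      exact this
    have t8 : ‖ES * ETᵀ‖ ≤ ‖ES‖ * ‖ET‖ := by
      have := Matrix.l2_opNorm_mul ES ETᵀ
      rw [aux_norm_transpose] at this
      exact this
    have t9 : η * ‖ES * Tᵀ + S * ETᵀ‖ ≤ η * (‖ES‖ * ‖T‖ + ‖S‖ * ‖ET‖) :=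
      mul_le_mul_of_nonneg_left (by linarith only [t5, t6, t7]) hη0.le
    have t10 : η * η * ‖ES * ETᵀ‖ ≤ η * η * (‖ES‖ * ‖ET‖) :=
      mul_le_mul_of_nonneg_left t8 (mul_nonneg hη0.le hη0.le)
    linarith only [t1, t2, t3, t4, t9, t10, hCn]
  -- numeric conclusion
  obtain ⟨k1, k2, k3⟩ := aux_numeric σ1 εstat ‖S‖ ‖T‖ ‖ES‖ ‖ET‖ hσ1pos hεnn
    (by linarith) (norm_nonneg _) (norm_nonneg _) (norm_nonneg _) (norm_nonneg _)
    hs2 ht2 hESn hETn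
  have hσ1ne : (10000 : ℝ) * σ1 ^ 2 > 0 := by positivity
  have g1 : ‖Sp * Spᵀ - DS‖ ≤ 100 * εstat := by
    have hrepr : η * (‖ES‖ * ‖S‖ + ‖S‖ * ‖ES‖) + η * η * (‖ES‖ * ‖ES‖)
        = (200 * (‖ES‖ * ‖S‖) * σ1 + ‖ES‖ * ‖ES‖) / (10000 * σ1 ^ 2) := by
      rw [hη]; field_simp; ring
    have hq : (200 * (‖ES‖ * ‖S‖) * σ1 + ‖ES‖ * ‖ES‖) / (10000 * σ1 ^ 2) ≤ 50 * εstat := by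
      rw [div_le_iff₀ hσ1ne]
      linarith only [k1]
    calc ‖Sp * Spᵀ - DS‖
        ≤ 50 * εstat + (η * (‖ES‖ * ‖S‖ + ‖S‖ * ‖ES‖) + η * η * (‖ES‖ * ‖ES‖)) := by
          linarith [hn1]
      _ ≤ 50 * εstat + 50 * εstat := by rw [hrepr]; linarith
      _ = 100 * εstat := by ring
  have g2 : ‖Tp * Tpᵀ‖ ≤ 100 * εstat := by
    have hrepr : η * (‖ET‖ * ‖T‖ + ‖T‖ * ‖ET‖) + η * η * (‖ET‖ * ‖ET‖)
        = (200 * (‖ET‖ * ‖T‖) * σ1 + ‖ET‖ * ‖ET‖) / (10000 * σ1 ^ 2) := by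
      rw [hη]; field_simp; ring
    have hq : (200 * (‖ET‖ * ‖T‖) * σ1 + ‖ET‖ * ‖ET‖) / (10000 * σ1 ^ 2) ≤ 50 * εstat := by
      rw [div_le_iff₀ hσ1ne]
      linarith only [k2]
    calc ‖Tp * Tpᵀ‖
        ≤ 50 * εstat + (η * (‖ET‖ * ‖T‖ + ‖T‖ * ‖ET‖) + η * η * (‖ET‖ * ‖ET‖)) := by
          linarith [hn2]
      _ ≤ 50 * εstat + 50 * εstat := by rw [hrepr]; linarith
      _ = 100 * εstat := by ring
  have g3 : ‖Sp * Tpᵀ‖ ≤ 100 * εstat := by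
    have hrepr : η * (‖ES‖ * ‖T‖ + ‖S‖ * ‖ET‖) + η * η * (‖ES‖ * ‖ET‖)
        = (100 * (‖ES‖ * ‖T‖ + ‖ET‖ * ‖S‖) * σ1 + ‖ES‖ * ‖ET‖) / (10000 * σ1 ^ 2) := by
      rw [hη]; field_simp; ring
    have hq : (100 * (‖ES‖ * ‖T‖ + ‖ET‖ * ‖S‖) * σ1 + ‖ES‖ * ‖ET‖) / (10000 * σ1 ^ 2)
        ≤ 50 * εstat := by
      rw [div_le_iff₀ hσ1ne]
      linarith only [k3]
    calc ‖Sp * Tpᵀ‖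
        ≤ 50 * εstat + (η * (‖ES‖ * ‖T‖ + ‖S‖ * ‖ET‖) + η * η * (‖ES‖ * ‖ET‖)) := by
          linarith [hn3]
      _ ≤ 50 * εstat + 50 * εstat := by rw [hrepr]; linarith
      _ = 100 * εstat := by ring
  rw [hDp]
  exact max_le (max_le g1 g2) g3
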